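/- Let X be a proper CAT(0) geodesic metric space and let a group G act on X by isometries, properly discontinuously and cocompactly (i.e. there exist p ∈ X and D > 0 such that every x ∈ X satisfies d(x, g·p) ≤ 2D for some g ∈ G). Then G has a finite symmetric generating set S and satisfies the quadratic radial isoperimetric inequality: there exist a finite set R of words over S representing the identity e, whose normal closure in F_S is the kernel of μ : F_S → G, and a constant C > 0, such that every word w = s₁⋯sₙ over S representing e satisfies Area_R(w) ≤ C · Σ_{i=1}^n (d_S(w̄(i), e) + 1). -/

import Mathlib

open scoped Pointwise

set_option maxHeartbeats 1600000

/-- The product in `G` of a word over the subset `S ⊆ G`. -/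
def wordProd {G : Type*} [Group G] (S : Set G) (w : List S) : G :=
  (w.map (fun s => (s : G))).prod

/-- The word metric `d_S(a,b)`: the least `n` such that `b⁻¹ * a` is a product of
`n` elements of `S`. -/
noncomputable def wordDist {G : Type*} [Group G] (S : Set G) (a b : G) : ℕ :=
  sInf {n | ∃ w : List S, w.length = n ∧ wordProd S w = b⁻¹ * a}

/-- The evaluation homomorphism `μ : F_S → G` from the free group on `S`. -/
noncomputable def muEval {G : Type*} [Group G] (S : Set G) : FreeGroup S →* G :=
  FreeGroup.lift (fun s => (s : G))

/-- A word over `S`, regarded as an element of the free group `F_S`. -/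
def wordToFree {G : Type*} [Group G] (S : Set G) (w : List S) : FreeGroup S :=
  (w.map FreeGroup.of).prod

/-- The combinatorial area of a word `w` over `S` with respect to the relator set
`R ⊆ F_S`: the least `k` such that `w = ∏_{i=1}^k vᵢ rᵢ vᵢ⁻¹` in `F_S` with each
`rᵢ ∈ R` or `rᵢ⁻¹ ∈ R`. -/
noncomputable def area {G : Type*} [Group G] (S : Set G) (R : Set (FreeGroup S))
    (w : List S) : ℕ :=
  sInf {k | ∃ v r : Fin k → FreeGroup S,
    (∀ i, r i ∈ R ∨ (r i)⁻¹ ∈ R) ∧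
    wordToFree S w = (List.ofFn (fun i => v i * r i * (v i)⁻¹)).prod}

/-- `γ : ℝ → X` is a geodesic from `x` to `y`: it is defined (relevantly) on
`[0, d(x,y)]`, starts at `x`, ends at `y`, and is an isometric embedding there. -/
def IsGeodesic {X : Type*} [MetricSpace X] (γ : ℝ → X) (x y : X) : Prop :=
  γ 0 = x ∧ γ (dist x y) = y ∧
    ∀ s ∈ Set.Icc (0 : ℝ) (dist x y), ∀ t ∈ Set.Icc (0 : ℝ) (dist x y),
      dist (γ s) (γ t) = |s - t|

/-- `X` is a geodesic metric space: every pair of points is joined by a geodesic. -/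
def IsGeodesicSpace (X : Type*) [MetricSpace X] : Prop :=
  ∀ x y : X, ∃ γ : ℝ → X, IsGeodesic γ x y

/-- `X` is a CAT(0) space: the comparison inequality holds along every geodesic. -/
def IsCAT0 (X : Type*) [MetricSpace X] : Prop :=
  ∀ x y z : X, ∀ γ : ℝ → X, IsGeodesic γ y z → ∀ t ∈ Set.Icc (0 : ℝ) 1,
    dist x (γ (t * dist y z)) ^ 2 ≤
      (1 - t) * dist x y ^ 2 + t * dist x z ^ 2 - t * (1 - t) * dist y z ^ 2

namespace CatAux

/-- Products of `k` conjugates of relators. -/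
def PC {F : Type*} [Group F] (R : Set F) (k : ℕ) (x : F) : Prop :=
  ∃ l : List (F × F), l.length = k ∧ (∀ p ∈ l, p.2 ∈ R ∨ p.2⁻¹ ∈ R) ∧
    x = (l.map (fun p => p.1 * p.2 * p.1⁻¹)).prod

variable {F : Type*} [Group F] {R : Set F}

lemma PC.one : PC R 0 (1 : F) := ⟨[], rfl, by simp, by simp⟩

lemma PC.single {r : F} (h : r ∈ R ∨ r⁻¹ ∈ R) : PC R 1 r :=
  ⟨[(1, r)], rfl, by simpa using h, by simp⟩

lemma PC.mul {k₁ k₂ : ℕ} {x y : F} (hx : PC R k₁ x) (hy : PC R k₂ y) :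
    PC R (k₁ + k₂) (x * y) := by
  obtain ⟨l₁, h₁, m₁, e₁⟩ := hx
  obtain ⟨l₂, h₂, m₂, e₂⟩ := hy
  refine ⟨l₁ ++ l₂, by simp [h₁, h₂], ?_, by simp [e₁, e₂]⟩
  intro q hq
  rcases List.mem_append.1 hq with h | h
  exacts [m₁ q h, m₂ q h]

private lemma conj_prod (a : F) (l : List (F × F)) :
    (l.map (fun p => (a * p.1) * p.2 * (a * p.1)⁻¹)).prod
      = a * (l.map (fun p => p.1 * p.2 * p.1⁻¹)).prod * a⁻¹ := by
  induction l with
  | nil => simp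
  | cons hd tl ih =>
    rw [List.map_cons, List.prod_cons, List.map_cons, List.prod_cons, ih]
    group

lemma PC.conj {k : ℕ} {x : F} (a : F) (hx : PC R k x) : PC R k (a * x * a⁻¹) := by
  obtain ⟨l, hl, m, e⟩ := hx
  refine ⟨l.map (fun p => (a * p.1, p.2)), by simp [hl], ?_, ?_⟩
  · intro q hq
    rcases List.mem_map.1 hq with ⟨q', hq', rfl⟩
    exact m q' hq'
  · rw [e, List.map_map]
    exact (conj_prod a l).symm

lemma PC.pow {r : F} (h : r ∈ R ∨ r⁻¹ ∈ R) (a : ℕ) : PC R a (r ^ a) := by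
  induction a with
  | zero => simpa using PC.one
  | succ n ih => rw [pow_succ]; exact ih.mul (PC.single h)

private lemma list_mem_ncl : ∀ l : List (F × F), (∀ p ∈ l, p.2 ∈ R ∨ p.2⁻¹ ∈ R) →
    (l.map (fun p => p.1 * p.2 * p.1⁻¹)).prod ∈ Subgroup.normalClosure R := by
  intro l
  induction l with
  | nil => intro _; simpa using one_mem _
  | cons hd tl ih =>
    intro m
    simp only [List.map_cons, List.prod_cons]
    refine mul_mem ?_ (ih (fun q hq => m q (List.mem_cons_of_mem _ hq)))
    have hr : hd.2 ∈ Subgroup.normalClosure R := by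
      rcases m hd (List.mem_cons_self) with h | h
      · exact Subgroup.subset_normalClosure h
      · simpa using (Subgroup.normalClosure R).inv_mem (Subgroup.subset_normalClosure h)
    exact (Subgroup.normalClosure_normal).conj_mem _ hr _

lemma PC.mem_normalClosure {k : ℕ} {x : F} (hx : PC R k x) :
    x ∈ Subgroup.normalClosure R := by
  obtain ⟨l, _, m, rfl⟩ := hx
  exact list_mem_ncl l m

end CatAux
section Words

variable {G : Type*} [Group G] {S : Set G}

lemma wordProd_nil : wordProd S [] = 1 := rfl

lemma wordProd_append (w₁ w₂ : List S) :
    wordProd S (w₁ ++ w₂) = wordProd S w₁ * wordProd S w₂ := by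
  simp [wordProd]

lemma wordProd_cons (s : S) (w : List S) :
    wordProd S (s :: w) = (s : G) * wordProd S w := by
  simp [wordProd]

lemma wordToFree_nil : wordToFree S ([] : List S) = 1 := rfl

lemma wordToFree_append (w₁ w₂ : List S) :
    wordToFree S (w₁ ++ w₂) = wordToFree S w₁ * wordToFree S w₂ := by
  simp [wordToFree]

lemma wordToFree_singleton (s : S) : wordToFree S [s] = FreeGroup.of s := by
  simp [wordToFree]

lemma muEval_of (s : S) : muEval S (FreeGroup.of s) = (s : G) :=
  FreeGroup.lift_apply_of

lemma muEval_wordToFree (w : List S) : muEval S (wordToFree S w) = wordProd S w := by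
  induction w with
  | nil => simp [wordToFree_nil, wordProd_nil]
  | cons s w ih =>
    have : (s :: w : List S) = [s] ++ w := rfl
    rw [this, wordToFree_append, wordProd_append, map_mul, ih, wordToFree_singleton,
      muEval_of]
    simp [wordProd_cons, wordProd]

lemma wordToFree_eq_mk (w : List S) :
    wordToFree S w = FreeGroup.mk (w.map (fun s => (s, true))) := by
  induction w with
  | nil => simpa [wordToFree_nil] using FreeGroup.one_eq_mk
  | cons s w ih =>
    have : (s :: w : List S) = [s] ++ w := rfl
    rw [this, wordToFree_append, wordToFree_singleton, ih]
    rw [show FreeGroup.of s = FreeGroup.mk [(s, true)] from rfl, FreeGroup.mul_mk]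
    simp

lemma wordProd_mem_closure (w : List S) : wordProd S w ∈ Subgroup.closure S := by
  induction w with
  | nil => simpa [wordProd_nil] using one_mem _
  | cons s w ih =>
    rw [wordProd_cons]
    exact mul_mem (Subgroup.subset_closure s.2) ih

lemma pc_area_le {R : Set (FreeGroup S)} {w : List S} {k : ℕ}
    (h : CatAux.PC R k (wordToFree S w)) : area S R w ≤ k := by
  obtain ⟨l, hl, hm, he⟩ := h
  subst hl
  apply Nat.sInf_le
  refine ⟨fun i => (l.get i).1, fun i => (l.get i).2,
    fun i => hm _ (by simpa using l.get_mem i.1 i.2), ?_⟩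
  rw [he]
  conv_lhs => rw [← List.ofFn_get l, List.map_ofFn]
  rfl

end Words

namespace CatAux

def prodN {F : Type*} [Group F] (f : ℕ → F) (m : ℕ) : F := ((List.range m).map f).prod

variable {F : Type*} [Group F] {R : Set F}

lemma prodN_zero (f : ℕ → F) : prodN f 0 = 1 := rfl

lemma prodN_succ (f : ℕ → F) (m : ℕ) : prodN f (m + 1) = prodN f m * f m := by
  simp [prodN, List.range_succ]

lemma ladder (u v t : ℕ → F) :
    ∀ m : ℕ, (∀ j < m, (u j * t (j + 1) * (v j)⁻¹ * (t j)⁻¹) ∈ R) →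
      PC R m (prodN u m * t m * (prodN v m)⁻¹ * (t 0)⁻¹) := by
  intro m
  induction m with
  | zero => intro _; simpa [prodN_zero] using PC.one
  | succ m ih =>
    intro h
    have key : prodN u (m + 1) * t (m + 1) * (prodN v (m + 1))⁻¹ * (t 0)⁻¹
        = (prodN u m * (u m * t (m + 1) * (v m)⁻¹ * (t m)⁻¹) * (prodN u m)⁻¹)
          * (prodN u m * t m * (prodN v m)⁻¹ * (t 0)⁻¹) := by
      rw [prodN_succ, prodN_succ]; group
    rw [key]
    have := (PC.conj (prodN u m) (PC.single (Or.inl (h m (by omega))))).mul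
      (ih (fun j hj => h j (by omega)))
    rwa [show 1 + m = m + 1 from by omega] at this

end CatAux

namespace CatAux

lemma abs_min_sub_min_right (a b c : ℝ) : |min a b - min a c| ≤ |b - c| := by
  rcases min_cases a b with ⟨e, h1⟩ | ⟨e, h1⟩ <;> rcases min_cases a c with ⟨f, h2⟩ | ⟨f, h2⟩ <;>
    rw [e, f] <;> cases abs_cases (b - c) with
  | _ h => first
    | (cases abs_cases (a - a) with | _ h' => linarith [h.1, h.2, h'.1, h'.2])
    | (cases abs_cases (a - c) with | _ h' => linarith [h.1, h.2, h'.1, h'.2])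
    | (cases abs_cases (b - a) with | _ h' => linarith [h.1, h.2, h'.1, h'.2])
    | (cases abs_cases (b - c) with | _ h' => linarith [h.1, h.2, h'.1, h'.2])

lemma abs_min_sub_min_left (a b c : ℝ) : |min a c - min b c| ≤ |a - b| := by
  rw [min_comm a c, min_comm b c]; exact abs_min_sub_min_right c a b

lemma geo_dist_start {X : Type*} [MetricSpace X] {γ : ℝ → X} {x y : X}
    (hγ : IsGeodesic γ x y) {s : ℝ} (h0 : 0 ≤ s) (h1 : s ≤ dist x y) :
    dist x (γ s) = s := by
  have := hγ.2.2 0 ⟨le_rfl, dist_nonneg⟩ s ⟨h0, h1⟩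
  rw [hγ.1] at this
  rw [this, zero_sub, abs_neg, abs_of_nonneg h0]

lemma geo_dist_end {X : Type*} [MetricSpace X] {γ : ℝ → X} {x y : X}
    (hγ : IsGeodesic γ x y) {s : ℝ} (h0 : 0 ≤ s) (h1 : s ≤ dist x y) :
    dist (γ s) y = dist x y - s := by
  have := hγ.2.2 s ⟨h0, h1⟩ (dist x y) ⟨dist_nonneg, le_rfl⟩
  rw [hγ.2.1] at this
  rw [this, abs_of_nonpos (by linarith)]
  ring

lemma ft_bound {X : Type*} [MetricSpace X] (hcat : IsCAT0 X) {p q q' : X} {γ γ' : ℝ → X}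
    (hγ : IsGeodesic γ p q) (hγ' : IsGeodesic γ' p q') {a : ℝ} (ha : 0 ≤ a) :
    dist (γ (min a (dist p q))) (γ' (min a (dist p q'))) ≤ 3 * dist q q' := by
  set L := dist p q with hLdef
  set L' := dist p q' with hL'def
  set δ := dist q q' with hδdef
  have hLnn : 0 ≤ L := dist_nonneg
  have hL'nn : 0 ≤ L' := dist_nonneg
  have hδnn : 0 ≤ δ := dist_nonneg
  set α := min a L with hα
  set β := min a L' with hβ
  have hα0 : 0 ≤ α := le_min ha hLnn
  have hαL : α ≤ L := min_le_right _ _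
  have hβ0 : 0 ≤ β := le_min ha hL'nn
  have hβL : β ≤ L' := min_le_right _ _
  have hLL' : |L - L'| ≤ δ := by
    rw [hLdef, hL'def, hδdef, dist_comm p q, dist_comm p q']
    exact abs_dist_sub_le q q' p
  have hαβ : |α - β| ≤ δ := le_trans (abs_min_sub_min_right a L L') hLL'
  rcases eq_or_lt_of_le hL'nn with h0' | hL'pos
  · -- L' = 0, so q' = p
    have hq' : p = q' := by rw [hL'def] at h0'; exact dist_eq_zero.1 h0'.symm
    have hβ' : β = 0 := le_antisymm (by simpa [← h0'] using hβL) hβ0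
    rw [hβ', hγ'.1]
    have : dist (γ α) p = α := by rw [dist_comm]; exact geo_dist_start hγ hα0 hαL
    rw [this]
    have : L = δ := by rw [hδdef, ← hq', dist_comm]
    linarith
  rcases eq_or_lt_of_le hLnn with h0 | hLpos
  · -- L = 0, so q = p
    have hq : p = q := by rw [hLdef] at h0; exact dist_eq_zero.1 h0.symm
    have hα' : α = 0 := le_antisymm (by simpa [← h0] using hαL) hα0
    rw [hα', hγ.1]
    have h1 : dist p (γ' β) = β := geo_dist_start hγ' hβ0 hβL
    have : L' = δ := by rw [hδdef, ← hq]
    linarith [h1.le.trans (le_of_eq rfl), hβL]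
  -- main case
  set t := α / L with ht
  have ht0 : 0 ≤ t := div_nonneg hα0 hLnn
  have ht1 : t ≤ 1 := (div_le_one hLpos).2 hαL
  have htL : t * L = α := div_mul_cancel₀ α (ne_of_gt hLpos)
  have htL'mem : 0 ≤ t * L' ∧ t * L' ≤ L' :=
    ⟨mul_nonneg ht0 hL'nn, by nlinarith⟩
  have s1 := hcat q p q' γ' hγ' t ⟨ht0, ht1⟩
  have s2 := hcat (γ' (t * L')) p q γ hγ t ⟨ht0, ht1⟩
  rw [← hL'def, ← hδdef] at s1
  rw [← hLdef] at s2
  rw [dist_comm q p, ← hLdef] at s1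
  have hd1 : dist (γ' (t * L')) p = t * L' := by
    rw [dist_comm]; exact geo_dist_start hγ' htL'mem.1 htL'mem.2
  rw [hd1, dist_comm (γ' (t * L')) q] at s2
  have key : dist (γ (t * L)) (γ' (t * L')) ≤ t * δ := by
    have s1' := mul_le_mul_of_nonneg_left s1 ht0
    have hsq : dist (γ (t * L)) (γ' (t * L')) ^ 2 ≤ (t * δ) ^ 2 := by
      rw [dist_comm]
      nlinarith [s1', s2]
    have hnn : 0 ≤ dist (γ (t * L)) (γ' (t * L')) := dist_nonneg
    nlinarith [hsq, mul_nonneg ht0 hδnn]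
  have hlast : dist (γ' (t * L')) (γ' β) = |t * L' - β| :=
    hγ'.2.2 (t * L') ⟨htL'mem.1, htL'mem.2⟩ β ⟨hβ0, hβL⟩
  have hb2 : |t * L' - β| ≤ 2 * δ := by
    have e1 : t * L' - α = (α / L) * (L' - L) := by
      rw [ht]; field_simp
    have e2 : |t * L' - α| ≤ |L' - L| := by
      rw [e1, abs_mul]
      have : |α / L| ≤ 1 := by
        rw [abs_of_nonneg (div_nonneg hα0 hLnn)]
        exact (div_le_one hLpos).2 hαL
      calc |α / L| * |L' - L| ≤ 1 * |L' - L| :=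
            mul_le_mul_of_nonneg_right this (abs_nonneg _)
        _ = |L' - L| := one_mul _
    have e3 : |L' - L| ≤ δ := by rw [abs_sub_comm]; exact hLL'
    calc |t * L' - β| ≤ |t * L' - α| + |α - β| := abs_sub_le _ α _
      _ ≤ δ + δ := add_le_add (e2.trans e3) hαβ
      _ = 2 * δ := by ring
  calc dist (γ α) (γ' β) ≤ dist (γ α) (γ' (t * L')) + dist (γ' (t * L')) (γ' β) :=
        dist_triangle _ _ _
    _ ≤ t * δ + 2 * δ := by
        rw [hlast]; exact add_le_add (by rw [htL] at key; exact key) hb2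
    _ ≤ 3 * δ := by nlinarith

end CatAux
section WordsMore

variable {G : Type*} [Group G] {S : Set G}

lemma wordDist_self (a : G) : wordDist S a a = 0 := by
  have : 0 ∈ {n | ∃ w : List S, w.length = n ∧ wordProd S w = a⁻¹ * a} :=
    ⟨[], rfl, by simp [wordProd_nil]⟩
  exact Nat.sInf_eq_zero.2 (Or.inl this)

lemma wordProd_take_succ (w : List S) (i : ℕ) (hi : i < w.length) :
    wordProd S (w.take (i + 1)) = wordProd S (w.take i) * (w[i] : G) := by
  rw [List.take_succ, List.getElem?_eq_getElem hi, wordProd_append]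
  simp [wordProd]

lemma wordToFree_take_succ (w : List S) (i : ℕ) (hi : i < w.length) :
    wordToFree S (w.take (i + 1)) = wordToFree S (w.take i) * FreeGroup.of w[i] := by
  rw [List.take_succ, List.getElem?_eq_getElem hi, wordToFree_append]
  simp [wordToFree]

end WordsMore

/-- A CAT(0) group satisfies the quadratic radial isoperimetric
inequality with respect to some finite symmetric generating set. -/
theorem cat0_group_quadratic_radial_isoperimetric
    {G X : Type*} [Group G] [MetricSpace X] [MulAction G X]
    (hgeo : IsGeodesicSpace X) (hcat : IsCAT0 X) (hproper : ProperSpace X)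
    -- `G` acts by isometries
    (hiso : ∀ (g : G) (x y : X), dist (g • x) (g • y) = dist x y)
    -- properly discontinuously
    (hpd : ∀ K K' : Set X, IsCompact K → IsCompact K' →
      {g : G | ((g • ·) '' K ∩ K').Nonempty}.Finite)
    -- and cocompactly
    (hcocpt : ∃ (p : X) (D : ℝ), 0 < D ∧ ∀ x : X, ∃ g : G, dist x (g • p) ≤ 2 * D) :
    ∃ S : Set G, S.Finite ∧ S⁻¹ = S ∧ Subgroup.closure S = ⊤ ∧
      ∃ R : Set (FreeGroup S), R.Finite ∧ (∀ r ∈ R, muEval S r = 1) ∧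
        Subgroup.normalClosure R = (muEval S).ker ∧
        ∃ C : ℝ, 0 < C ∧ ∀ w : List S, wordProd S w = 1 →
          (area S R w : ℝ) ≤ C * ∑ i ∈ Finset.range w.length,
            ((wordDist S (wordProd S (w.take (i + 1))) 1 : ℝ) + 1) := by
  classical
  obtain ⟨p, D, hD, hcoc⟩ := hcocpt
  choose φ hφ using hcoc
  choose Γ hΓ using fun g : G => hgeo p (g • p)
  have hinvdist : ∀ (g : G) (x : X), dist p (g⁻¹ • x) = dist (g • p) x := by
    intro g x
    have := hiso g p (g⁻¹ • x)
    rw [smul_inv_smul] at this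
    exact this.symm
  have hconj : ∀ a b : G, dist p ((a⁻¹ * b) • p) = dist (a • p) (b • p) := by
    intro a b
    rw [mul_smul, hinvdist]
  -- The geometric data: a "chain" function H and a "chain length" N.
  have hdata : ∃ (Na : G → ℕ) (H : G → ℕ → G),
      (∀ g, 1 ≤ Na g) ∧
      (∀ g, H g 0 = 1) ∧
      (∀ g j, Na g ≤ j → H g j = g) ∧
      (∀ g j, dist p (((H g j)⁻¹ * H g (j + 1)) • p) ≤ 5 * D) ∧
      (∀ g g' : G, dist (g • p) (g' • p) ≤ 5 * D →
        ∀ j, dist p (((H g j)⁻¹ * H g' j) • p) ≤ 19 * D) ∧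
      (∀ (g : G) (n : ℕ), dist p (g • p) ≤ D * n → Na g ≤ n + 1) := by
    set Na : G → ℕ := fun g => ⌈dist p (g • p) / D⌉₊ + 1 with hNa
    set pt : G → ℕ → X := fun g j => Γ g (min (j * D) (dist p (g • p))) with hpt
    set H : G → ℕ → G := fun g j =>
      if j = 0 then 1 else if Na g ≤ j then g else φ (pt g j) with hH
    have hND : ∀ (g : G) (j : ℕ), Na g ≤ j → dist p (g • p) ≤ j * D := by
      intro g j hj
      have h1 : dist p (g • p) / D ≤ (⌈dist p (g • p) / D⌉₊ : ℝ) := Nat.le_ceil _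
      have h2 : ((⌈dist p (g • p) / D⌉₊ : ℕ) : ℝ) ≤ (j : ℝ) := by
        have hj' : ⌈dist p (g • p) / D⌉₊ ≤ j := by
          simp only [hNa] at hj; omega
        exact_mod_cast hj'
      have h3 := (div_le_iff₀ hD).1 (h1.trans h2)
      linarith
    have hpt0 : ∀ g, pt g 0 = p := by
      intro g
      simp only [hpt]
      rw [show (((0:ℕ):ℝ) * D) = 0 by norm_num, min_eq_left dist_nonneg, (hΓ g).1]
    have hptN : ∀ g j, Na g ≤ j → pt g j = g • p := by
      intro g j hj
      simp only [hpt]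
      rw [min_eq_right (hND g j hj), (hΓ g).2.1]
    have hHp : ∀ g j, dist (pt g j) (H g j • p) ≤ 2 * D := by
      intro g j
      by_cases h0 : j = 0
      · subst h0
        rw [show H g 0 = 1 by simp [hH], hpt0, one_smul, dist_self]; positivity
      · by_cases hNj : Na g ≤ j
        · simp only [hH]; rw [if_neg h0, if_pos hNj, hptN g j hNj, dist_self]; positivity
        · simp only [hH]; rw [if_neg h0, if_neg hNj]; exact hφ (pt g j)
    refine ⟨Na, H, ?_, ?_, ?_, ?_, ?_, ?_⟩
    · intro g; exact Nat.le_add_left 1 _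
    · intro g; simp [hH]
    · intro g j hj
      have h0 : j ≠ 0 := by
        intro h; subst h; simp only [hNa] at hj; omega
      simp only [hH]; rw [if_neg h0, if_pos hj]
    · intro g j
      rw [hconj]
      have h1 := hHp g j
      have h2 := hHp g (j + 1)
      have h3 : dist (pt g j) (pt g (j + 1)) ≤ D := by
        simp only [hpt]
        have e := (hΓ g).2.2 (min ((j:ℝ) * D) (dist p (g • p)))
          ⟨le_min (by positivity) dist_nonneg, min_le_right _ _⟩
          (min (((j+1:ℕ):ℝ) * D) (dist p (g • p)))
          ⟨le_min (by positivity) dist_nonneg, min_le_right _ _⟩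
        rw [e]
        refine le_trans (CatAux.abs_min_sub_min_left _ _ _) ?_
        rw [show ((j:ℝ) * D - ((j+1:ℕ):ℝ) * D) = -D by push_cast; ring, abs_neg,
          abs_of_nonneg hD.le]
      calc dist (H g j • p) (H g (j+1) • p)
          ≤ dist (H g j • p) (pt g j) + dist (pt g j) (pt g (j+1))
            + dist (pt g (j+1)) (H g (j+1) • p) := dist_triangle4 _ _ _ _
        _ ≤ 2*D + D + 2*D := by
            refine add_le_add (add_le_add ?_ h3) h2
            rw [dist_comm]; exact h1
        _ = 5 * D := by ring
    · intro g g' hgg' j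
      rw [hconj]
      have hft : dist (pt g j) (pt g' j) ≤ 15 * D := by
        have hb := CatAux.ft_bound hcat (hΓ g) (hΓ g') (a := (j:ℝ) * D) (by positivity)
        simp only [hpt]
        calc dist (Γ g (min ((j:ℝ)*D) (dist p (g•p)))) (Γ g' (min ((j:ℝ)*D) (dist p (g'•p))))
            ≤ 3 * dist (g•p) (g'•p) := hb
          _ ≤ 15 * D := by linarith
      calc dist (H g j • p) (H g' j • p)
          ≤ dist (H g j • p) (pt g j) + dist (pt g j) (pt g' j)
            + dist (pt g' j) (H g' j • p) := dist_triangle4 _ _ _ _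
        _ ≤ 2*D + 15*D + 2*D := by
            refine add_le_add (add_le_add ?_ hft) (hHp g' j)
            rw [dist_comm]; exact hHp g j
        _ = 19 * D := by ring
    · intro g n hn
      simp only [hNa]
      have hc : ⌈dist p (g • p) / D⌉₊ ≤ n := Nat.ceil_le.2 ((div_le_iff₀ hD).2 (by linarith))
      omega
  obtain ⟨Na, H, hN1, hH0, hHN, hsigS, htrans, hNle⟩ := hdata
  have hN20 : ∀ g : G, dist p (g • p) ≤ 19 * D → Na g ≤ 20 := by
    intro g hg
    have : dist p (g • p) ≤ D * 19 := by linarith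
    exact le_trans (hNle g 19 this) (by norm_num)
  -- The generating set
  set S : Set G := {g : G | dist p (g • p) ≤ 5 * D} with hSdef
  have heS : (1 : G) ∈ S := by
    show dist p ((1 : G) • p) ≤ 5 * D
    rw [one_smul, dist_self]; positivity
  have hSfin : S.Finite := by
    apply (hpd {p} (Metric.closedBall p (5 * D)) isCompact_singleton
      (isCompact_closedBall p _)).subset
    intro g hg
    exact ⟨g • p, ⟨p, rfl, rfl⟩, by rw [Metric.mem_closedBall, dist_comm]; exact hg⟩
  have hSsymm : S⁻¹ = S := by
    ext g
    show g⁻¹ ∈ S ↔ g ∈ S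
    constructor <;> intro h
    · have : dist p ((g⁻¹)⁻¹ • p) = dist (g⁻¹ • p) p := hinvdist g⁻¹ p
      show dist p (g • p) ≤ 5 * D
      rw [inv_inv] at this
      rw [this, dist_comm]
      exact h
    · show dist p (g⁻¹ • p) ≤ 5 * D
      rw [hinvdist g p, dist_comm]
      exact h
  -- letters and chain words
  set σ : G → ℕ → S := fun g j => ⟨(H g j)⁻¹ * H g (j + 1), hsigS g j⟩ with hσdef
  set Wd : G → ℕ → List S := fun g m => (List.range m).map (σ g) with hWddef
  have hWprod : ∀ (g : G) (m : ℕ), wordProd S (Wd g m) = H g m := by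
    intro g m
    induction m with
    | zero => simp [hWddef, wordProd_nil, hH0 g]
    | succ m ih =>
      have : Wd g (m + 1) = Wd g m ++ [σ g m] := by
        simp [hWddef, List.range_succ]
      rw [this, wordProd_append, ih]
      simp [wordProd, hσdef]
  have hWg : ∀ g : G, wordProd S (Wd g (Na g)) = g := fun g =>
    (hWprod g (Na g)).trans (hHN g (Na g) le_rfl)
  have hWlen : ∀ g m, (Wd g m).length = m := by intro g m; simp [hWddef]
  have hclos : Subgroup.closure S = ⊤ := by
    rw [eq_top_iff]
    intro g _
    rw [← hWg g]
    exact wordProd_mem_closure _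
  -- radius comparison
  have hdistle : ∀ w : List S, dist p (wordProd S w • p) ≤ 5 * D * w.length := by
    intro w
    induction w with
    | nil => simp [wordProd_nil, one_smul]
    | cons s w ih =>
      rw [wordProd_cons]
      calc dist p (((s : G) * wordProd S w) • p)
          ≤ dist p ((s : G) • p) + dist ((s : G) • p) (((s : G) * wordProd S w) • p) :=
            dist_triangle _ _ _
        _ ≤ 5 * D + 5 * D * w.length := by
            refine add_le_add s.2 ?_
            rw [mul_smul, hiso]
            exact ih
        _ = 5 * D * (w.length + 1) := by ring
        _ = 5 * D * (s :: w : List S).length := by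
            simp only [List.length_cons]
            push_cast; ring
  have hNrad : ∀ g : G, Na g ≤ 5 * wordDist S g 1 + 1 := by
    intro g
    have hne : {n | ∃ w : List S, w.length = n ∧ wordProd S w = (1 : G)⁻¹ * g}.Nonempty :=
      ⟨Na g, Wd g (Na g), hWlen g (Na g), by rw [hWg g]; simp⟩
    obtain ⟨w, hwl, hwp⟩ := Nat.sInf_mem hne
    have hwp' : wordProd S w = g := by rw [hwp]; simp
    have : dist p (g • p) ≤ D * (5 * wordDist S g 1) := by
      have h5 := hdistle w
      rw [hwp', hwl,
        show sInf {n | ∃ w : List S, w.length = n ∧ wordProd S w = (1:G)⁻¹ * g}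
          = wordDist S g 1 from rfl] at h5
      push_cast at h5 ⊢
      linarith
    exact hNle g _ (by push_cast; exact this)
  -- relators
  set Rel : Set (FreeGroup S) :=
    {x | (∃ l : List (S × Bool), l.length ≤ 42 ∧ x = FreeGroup.mk l) ∧ muEval S x = 1}
    with hReldef
  have hRfin : Rel.Finite := by
    haveI : Finite S := hSfin.to_subtype
    apply Set.Finite.subset ((List.finite_length_le (S × Bool) 42).image FreeGroup.mk)
    rintro x ⟨⟨l, hl, rfl⟩, -⟩
    exact ⟨l, hl, rfl⟩
  have hRker : ∀ r ∈ Rel, muEval S r = 1 := fun r hr => hr.2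
  set ew : S := ⟨1, heS⟩ with hewdef
  have hofe : FreeGroup.of ew ∈ Rel := by
    refine ⟨⟨[(ew, true)], by norm_num, rfl⟩, ?_⟩
    rw [muEval_of]
  -- extension of chain words by trivial letters
  have hWext : ∀ (g : G) (m : ℕ), Na g ≤ m →
      wordToFree S (Wd g m) = wordToFree S (Wd g (Na g)) * (FreeGroup.of ew) ^ (m - Na g) := by
    intro g m hm
    induction m, hm using Nat.le_induction with
    | base => simp
    | succ m hm ih =>
      have h1 : Wd g (m + 1) = Wd g m ++ [σ g m] := by
        simp [hWddef, List.range_succ]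
      have h2 : σ g m = ew := by
        have e1 : H g m = g := hHN g m hm
        have e2 : H g (m + 1) = g := hHN g (m + 1) (le_trans hm (Nat.le_succ m))
        apply Subtype.ext
        show (H g m)⁻¹ * H g (m + 1) = 1
        rw [e1, e2, inv_mul_cancel]
      rw [h1, wordToFree_append, ih, wordToFree_singleton, h2,
        show m + 1 - Na g = (m - Na g) + 1 from by omega, pow_succ, mul_assoc]
  -- main filling estimate
  have hfill : ∀ w : List S, wordProd S w = 1 →
      ∃ K : ℕ, CatAux.PC Rel K (wordToFree S w) ∧
        K ≤ 30 * ∑ i ∈ Finset.range w.length,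
          (wordDist S (wordProd S (w.take (i + 1))) 1 + 1) := by
    intro w hw
    set n := w.length with hn
    set g : ℕ → G := fun i => wordProd S (w.take i) with hgdef
    set rad : ℕ → ℕ := fun i => wordDist S (g i) 1 with hraddef
    set Cf : G → FreeGroup S := fun a => wordToFree S (Wd a (Na a)) with hCfdef
    set sel : ℕ → FreeGroup S := fun i =>
      if h : i < w.length then FreeGroup.of w[i] else 1 with hseldef
    have hrad0 : rad 0 = 0 := by
      simp only [hraddef, hgdef, List.take_zero]
      exact wordDist_self _
    have hradn : rad n = 0 := by
      have : g n = 1 := by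
        simp only [hgdef, hn]
        rw [List.take_length]
        exact hw
      simp only [hraddef, this]
      exact wordDist_self _
    have hgsucc : ∀ i (hi : i < n), g (i + 1) = g i * (w[i]'(hn ▸ hi) : G) := by
      intro i hi
      simp only [hgdef]
      exact wordProd_take_succ w i (by omega)
    -- the per-edge filling
    have hedge : ∀ i, i < n → ∃ k : ℕ,
        CatAux.PC Rel k (Cf (g i) * sel i * (Cf (g (i + 1)))⁻¹) ∧
          k ≤ 15 * (rad i + 1) + 15 * (rad (i + 1) + 1) := by
      intro i hi
      have hiw : i < w.length := by omega
      have hsel : sel i = FreeGroup.of (w[i]'hiw) := dif_pos hiw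
      have hab : g (i + 1) = g i * (w[i]'hiw : G) := hgsucc i hi
      have hdab : dist (g i • p) (g (i + 1) • p) ≤ 5 * D := by
        rw [hab, mul_smul, hiso (g i) p ((w[i]'hiw : G) • p)]
        exact (w[i]'hiw).2
      set a := g i with hadef
      set b := g (i + 1) with hbdef
      set m := max (Na a) (Na b) with hmdef
      have hma : Na a ≤ m := le_max_left _ _
      have hmb : Na b ≤ m := le_max_right _ _
      have hm1 : 1 ≤ m := le_trans (hN1 a) hma
      set kk : ℕ → G := fun j => (H a j)⁻¹ * H b j with hkkdef
      have hkk19 : ∀ j, dist p (kk j • p) ≤ 19 * D := fun j => htrans a b hdab j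
      have hkkN : ∀ j, Na (kk j) ≤ 20 := fun j => hN20 _ (hkk19 j)
      set tl : ℕ → List (S × Bool) := fun j =>
        if j = 0 then [] else if j = m then [((w[i]'hiw), true)]
        else (Wd (kk j) (Na (kk j))).map (fun s => (s, true)) with htldef
      set t : ℕ → FreeGroup S := fun j => FreeGroup.mk (tl j) with htdef
      have htlen : ∀ j, (tl j).length ≤ 20 := by
        intro j
        simp only [htldef]
        split
        · simp
        · split
          · simp
          · rw [List.length_map, hWlen]
            exact hkkN j
      have hμt : ∀ j, j ≤ m → muEval S (t j) = kk j := by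
        intro j hj
        by_cases h0 : j = 0
        · subst h0
          have e : t 0 = 1 := by
            simp only [htdef, htldef, if_pos rfl]
            exact FreeGroup.one_eq_mk.symm
          rw [e, map_one]
          simp only [hkkdef]
          rw [hH0 a, hH0 b]
          group
        · by_cases hjm : j = m
          · have e : t j = FreeGroup.of (w[i]'hiw) := by
              simp only [htdef, htldef, if_neg h0, if_pos hjm]
              rfl
            rw [e, muEval_of]
            simp only [hkkdef]
            rw [hjm, hHN a m hma, hHN b m hmb, hab]
            group
          · have e : t j = wordToFree S (Wd (kk j) (Na (kk j))) := by
              simp only [htdef, htldef, if_neg h0, if_neg hjm]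
              rw [wordToFree_eq_mk]
            rw [e, muEval_wordToFree, hWg]
      have hcell : ∀ j, j < m →
          (FreeGroup.of (σ a j) * t (j + 1) * (FreeGroup.of (σ b j))⁻¹ * (t j)⁻¹) ∈ Rel := by
        intro j hj
        constructor
        · refine ⟨[((σ a j), true)] ++ tl (j + 1) ++ [((σ b j), false)]
            ++ FreeGroup.invRev (tl j), ?_, ?_⟩
          · have l1 := htlen (j + 1)
            have l2 := htlen j
            simp only [List.length_append, FreeGroup.invRev_length, List.length_singleton]
            omega
          · rw [show FreeGroup.of (σ a j) = FreeGroup.mk [((σ a j), true)] from rfl,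
              show FreeGroup.of (σ b j) = FreeGroup.mk [((σ b j), true)] from rfl,
              htdef]
            rw [FreeGroup.inv_mk, FreeGroup.inv_mk, FreeGroup.mul_mk, FreeGroup.mul_mk,
              FreeGroup.mul_mk]
            rw [show FreeGroup.invRev [((σ b j), true)] = [((σ b j), false)] from rfl]
        · simp only [map_mul, map_inv, muEval_of]
          rw [hμt (j + 1) (by omega), hμt j (by omega)]
          simp only [hσdef, hkkdef]
          group
      have hladder := CatAux.ladder (R := Rel) (fun j => FreeGroup.of (σ a j))
        (fun j => FreeGroup.of (σ b j)) t m hcell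
      have hpu : CatAux.prodN (fun j => FreeGroup.of (σ a j)) m = wordToFree S (Wd a m) := by
        simp only [CatAux.prodN, hWddef, wordToFree, List.map_map]
        rfl
      have hpv : CatAux.prodN (fun j => FreeGroup.of (σ b j)) m = wordToFree S (Wd b m) := by
        simp only [CatAux.prodN, hWddef, wordToFree, List.map_map]
        rfl
      have ht0 : t 0 = 1 := by
        simp only [htdef, htldef, if_pos rfl]
        exact FreeGroup.one_eq_mk.symm
      have htm : t m = FreeGroup.of (w[i]'hiw) := by
        simp only [htdef, htldef, if_neg (by omega : ¬ m = 0), if_pos rfl]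
        rfl
      rw [hpu, hpv, ht0, htm, inv_one, mul_one] at hladder
      -- hladder : PC Rel m (wordToFree S (Wd a m) * of s * (wordToFree S (Wd b m))⁻¹)
      set A := wordToFree S (Wd a m) with hAdef
      set B := wordToFree S (Wd b m) with hBdef
      have hCa : Cf a = A * ((FreeGroup.of ew) ^ (m - Na a))⁻¹ := by
        rw [hAdef, hWext a m hma]
        simp only [hCfdef]
        group
      have hCb : Cf b = B * ((FreeGroup.of ew) ^ (m - Na b))⁻¹ := by
        rw [hBdef, hWext b m hmb]
        simp only [hCfdef]
        group
      have hkey : Cf a * sel i * (Cf b)⁻¹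
          = (A * ((FreeGroup.of ew) ^ (m - Na a))⁻¹ * A⁻¹)
            * ((A * sel i) * (FreeGroup.of ew) ^ (m - Na b) * (A * sel i)⁻¹)
            * (A * sel i * B⁻¹) := by
        rw [hCa, hCb]
        group
      have h1 : CatAux.PC Rel (m - Na a) (((FreeGroup.of ew) ^ (m - Na a))⁻¹) := by
        rw [← inv_pow]
        exact CatAux.PC.pow (Or.inr (by rw [inv_inv]; exact hofe)) _
      have h2 : CatAux.PC Rel (m - Na b) ((FreeGroup.of ew) ^ (m - Na b)) :=
        CatAux.PC.pow (Or.inl hofe) _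
      have hsel' : A * sel i * B⁻¹ = A * FreeGroup.of (w[i]'hiw) * B⁻¹ := by rw [hsel]
      refine ⟨(m - Na a) + (m - Na b) + m, ?_, ?_⟩
      · rw [hkey]
        refine CatAux.PC.mul (CatAux.PC.mul ?_ ?_) ?_
        · exact CatAux.PC.conj A h1
        · exact CatAux.PC.conj (A * sel i) h2
        · rw [hsel']
          exact hladder
      · have b1 : Na a ≤ 5 * rad i + 1 := hNrad a
        have b2 : Na b ≤ 5 * rad (i + 1) + 1 := hNrad b
        have b3 : m ≤ Na a + Na b := by omega
        omega
    -- telescoping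
    set P : ℕ → FreeGroup S := fun i => Cf (g i) * sel i * (Cf (g (i + 1)))⁻¹ with hPdef
    have htel : ∀ m', m' ≤ n →
        CatAux.prodN P m' = Cf (g 0) * wordToFree S (w.take m') * (Cf (g m'))⁻¹ := by
      intro m' hm'
      induction m' with
      | zero =>
        rw [CatAux.prodN_zero]
        simp only [List.take_zero, wordToFree_nil]
        group
      | succ m' ih =>
        rw [CatAux.prodN_succ, ih (by omega)]
        have hm'w : m' < w.length := by omega
        have hs : sel m' = FreeGroup.of (w[m']'hm'w) := dif_pos hm'w
        rw [wordToFree_take_succ w m' hm'w]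
        simp only [hPdef]
        rw [hs]
        group
    have hacc : ∀ m', m' ≤ n → ∃ K : ℕ, CatAux.PC Rel K (CatAux.prodN P m') ∧
        K ≤ ∑ i ∈ Finset.range m', (15 * (rad i + 1) + 15 * (rad (i + 1) + 1)) := by
      intro m' hm'
      induction m' with
      | zero =>
        refine ⟨0, ?_, by simp⟩
        rw [CatAux.prodN_zero]
        exact CatAux.PC.one
      | succ m' ih =>
        obtain ⟨K, hK, hKle⟩ := ih (by omega)
        obtain ⟨k, hk, hkle⟩ := hedge m' (by omega)
        refine ⟨K + k, ?_, ?_⟩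
        · rw [CatAux.prodN_succ]
          exact hK.mul hk
        · rw [Finset.sum_range_succ]
          omega
    obtain ⟨K, hK, hKle⟩ := hacc n le_rfl
    have hg0 : g 0 = 1 := by simp [hgdef, wordProd_nil]
    have hgn : g n = 1 := by
      simp only [hgdef, hn]
      rw [List.take_length]
      exact hw
    have hEq : wordToFree S w = (Cf 1)⁻¹ * CatAux.prodN P n * ((Cf 1)⁻¹)⁻¹ := by
      have := htel n le_rfl
      rw [hn, List.take_length, hg0, hgn] at this
      rw [this]
      group
    refine ⟨K, ?_, ?_⟩
    · rw [hEq]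
      exact CatAux.PC.conj _ hK
    · refine le_trans hKle ?_
      have hshift : ∑ i ∈ Finset.range n, (rad i + 1)
          = ∑ i ∈ Finset.range n, (rad (i + 1) + 1) := by
        have e1 := Finset.sum_range_succ (fun i => rad i + 1) n
        have e2 := Finset.sum_range_succ' (fun i => rad i + 1) n
        rw [e1] at e2
        rw [hrad0, hradn] at e2
        omega
      have hsplit : ∑ i ∈ Finset.range n, (15 * (rad i + 1) + 15 * (rad (i + 1) + 1))
          = 15 * (∑ i ∈ Finset.range n, (rad i + 1))
            + 15 * (∑ i ∈ Finset.range n, (rad (i + 1) + 1)) := by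
        rw [Finset.sum_add_distrib, ← Finset.mul_sum, ← Finset.mul_sum]
      rw [hsplit, hshift]
      have heq : ∑ i ∈ Finset.range n, (rad (i + 1) + 1)
          = ∑ i ∈ Finset.range w.length, (wordDist S (wordProd S (w.take (i + 1))) 1 + 1) := by
        rfl
      rw [heq]
      omega
  -- the normal closure is the kernel
  have hncl : Subgroup.normalClosure Rel = (muEval S).ker := by
    apply le_antisymm
    · apply Subgroup.normalClosure_le_normal
      intro r hr
      exact MonoidHom.mem_ker.2 (hRker r hr)
    · intro x hx
      have hrep : ∀ y : FreeGroup S, ∃ w : List S,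
          muEval S y = wordProd S w ∧
            y⁻¹ * wordToFree S w ∈ Subgroup.normalClosure Rel := by
        intro y
        induction y using FreeGroup.induction_on with
        | C1 =>
          refine ⟨[], by simp [wordProd_nil], ?_⟩
          simpa [wordToFree_nil] using one_mem _
        | of s =>
          refine ⟨[s], ?_, ?_⟩
          · rw [muEval_of]
            simp [wordProd]
          · rw [wordToFree_singleton, inv_mul_cancel]
            exact one_mem _
        | inv_of s _ =>
          have hs' : (s : G)⁻¹ ∈ S :=
            (Set.ext_iff.1 hSsymm ((s : G)⁻¹)).1 (Set.inv_mem_inv.2 s.2)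
          refine ⟨[⟨(s : G)⁻¹, hs'⟩], ?_, ?_⟩
          · simp only [show (pure s : FreeGroup S) = FreeGroup.of s from rfl, map_inv,
              muEval_of]
            simp [wordProd]
          · rw [wordToFree_singleton, inv_inv]
            apply Subgroup.subset_normalClosure
            refine ⟨⟨[(s, true), (⟨(s : G)⁻¹, hs'⟩, true)], by norm_num, rfl⟩, ?_⟩
            rw [map_mul, muEval_of, muEval_of]
            simp
        | mul y z ihy ihz =>
          obtain ⟨wy, hy1, hy2⟩ := ihy
          obtain ⟨wz, hz1, hz2⟩ := ihz
          refine ⟨wy ++ wz, ?_, ?_⟩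
          · rw [map_mul, wordProd_append, hy1, hz1]
          · rw [wordToFree_append]
            have key : (y * z)⁻¹ * (wordToFree S wy * wordToFree S wz)
                = (z⁻¹ * (y⁻¹ * wordToFree S wy) * z⁻¹⁻¹) * (z⁻¹ * wordToFree S wz) := by
              group
            rw [key]
            exact mul_mem ((Subgroup.normalClosure_normal).conj_mem _ hy2 z⁻¹) hz2
      obtain ⟨w, hμw, hmem⟩ := hrep x
      have hw1 : wordProd S w = 1 := by rw [← hμw]; exact MonoidHom.mem_ker.1 hx
      obtain ⟨K, hK, -⟩ := hfill w hw1
      have h2 : wordToFree S w ∈ Subgroup.normalClosure Rel := hK.mem_normalClosure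
      have hxeq : x = wordToFree S w * (x⁻¹ * wordToFree S w)⁻¹ := by group
      rw [hxeq]
      exact mul_mem h2 (inv_mem hmem)
  refine ⟨S, hSfin, hSsymm, hclos, Rel, hRfin, hRker, hncl, 30, by norm_num, ?_⟩
  intro w hw
  obtain ⟨K, hK, hKle⟩ := hfill w hw
  have h1 : area S Rel w ≤ 30 * ∑ i ∈ Finset.range w.length,
      (wordDist S (wordProd S (w.take (i + 1))) 1 + 1) := le_trans (pc_area_le hK) hKle
  calc (area S Rel w : ℝ)
      ≤ ((30 * ∑ i ∈ Finset.range w.length,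
          (wordDist S (wordProd S (w.take (i + 1))) 1 + 1) : ℕ) : ℝ) := by exact_mod_cast h1
    _ = 30 * ∑ i ∈ Finset.range w.length,
          ((wordDist S (wordProd S (w.take (i + 1))) 1 : ℝ) + 1) := by push_cast; ring
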